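/- Let n ≥ 1 and let Z/2 act on the unit sphere S^n ⊆ ℝ^{n+1} by the reflection g(x₀,…,x_n) = (−x₀, x₁,…,x_n), which interchanges the two hemispheres and fixes an equatorial (n−1)-sphere. Then there exists a (Z/2,3)-motion planner defined on all of S^n × S^n; in particular TC^{Z/2,3}(S^n) = 1 and the effective topological complexity satisfies TC^{Z/2,∞}(S^n) = 1. -/

import Mathlib

open Set

/-- The space of `k`-tuples of paths in `X` that are consecutive up to the `G`-action:
the `(i+1)`-st path starts in the `G`-orbit of the endpoint of the `i`-th path. -/
def effPk (G X : Type*) [Group G] [TopologicalSpace X] [MulAction G X] (k : ℕ) :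
    Set (Fin k → C(unitInterval, X)) :=
  {γ | ∀ (i : ℕ) (h : i + 1 < k),
    γ ⟨i + 1, h⟩ 0 ∈ MulAction.orbit G (γ ⟨i, Nat.lt_of_succ_lt h⟩ 1)}

/-- A `(G,k)`-motion planner on `U ⊆ X × X`: a continuous section over `U` of the map
`π_k` sending a `k`-tuple of consecutive-up-to-`G` paths to its (start, end) pair. -/
def IsEffPlanner (G X : Type*) [Group G] [TopologicalSpace X] [MulAction G X]
    (k : ℕ) (hk : 0 < k) (U : Set (X × X)) : Prop :=
  ∃ s : U → (Fin k → C(unitInterval, X)),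
    Continuous s ∧ (∀ u, s u ∈ effPk G X k) ∧
    ∀ u : U, (s u ⟨0, hk⟩) 0 = (u : X × X).1 ∧
      (s u ⟨k - 1, Nat.sub_lt hk Nat.one_pos⟩) 1 = (u : X × X).2

/-- `TC^{G,k}(X)`: the least `ℓ ≥ 1` such that `X × X` admits an open cover by `ℓ` sets,
each admitting a `(G,k)`-motion planner; `∞` if there is no such `ℓ`. -/
noncomputable def effTC (G X : Type*) [Group G] [TopologicalSpace X] [MulAction G X]
    (k : ℕ) (hk : 0 < k) : ℕ∞ :=
  sInf {ℓ : ℕ∞ | ∃ n : ℕ, ℓ = n ∧ 1 ≤ n ∧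
    ∃ U : Fin n → Set (X × X), (∀ i, IsOpen (U i)) ∧ (⋃ i, U i) = Set.univ ∧
      ∀ i, IsEffPlanner G X k hk (U i)}

/-- Effective topological complexity `TC^{G,∞}(X)`: the minimum of `TC^{G,k}(X)` over `k ≥ 1`. -/
noncomputable def effTCinf (G X : Type*) [Group G] [TopologicalSpace X] [MulAction G X] : ℕ∞ :=
  ⨅ k : ℕ, effTC G X (k + 1) k.succ_pos

/-- Farber's (non-reduced) topological complexity `TC(X)`. -/
noncomputable def farberTC (X : Type*) [TopologicalSpace X] : ℕ∞ :=
  sInf {ℓ : ℕ∞ | ∃ n : ℕ, ℓ = n ∧ 1 ≤ n ∧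
    ∃ U : Fin n → Set (X × X), (∀ i, IsOpen (U i)) ∧ (⋃ i, U i) = Set.univ ∧
      ∀ i, ∃ s : (U i) → C(unitInterval, X), Continuous s ∧
        ∀ u : (U i), (s u) 0 = (u : X × X).1 ∧ (s u) 1 = (u : X × X).2}

/-- The action of `ℤ/2` on `X` generated by an involution `f`. -/
def involutionAction {X : Type*} (f : X → X) (hf : ∀ x, f (f x) = x) :
    MulAction (Multiplicative (ZMod 2)) X where
  smul g x := if g.toAdd = 1 then f x else x
  one_smul x := by
    show (if (Multiplicative.toAdd (1 : Multiplicative (ZMod 2))) = 1 then f x else x) = x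
    simp
  mul_smul a b x := by
    have hcases : ∀ z : ZMod 2, z = 0 ∨ z = 1 := by decide
    show (if (Multiplicative.toAdd (a * b)) = 1 then f x else x) =
      (if a.toAdd = 1 then f (if b.toAdd = 1 then f x else x) else (if b.toAdd = 1 then f x else x))
    rcases hcases a.toAdd with ha | ha <;> rcases hcases b.toAdd with hb | hb <;>
      simp [toAdd_mul, ha, hb, hf x]



/-- The linear involution of `ℝ^{n+1}` negating the first `m` coordinates. -/
def negOn (n m : ℕ) (x : EuclideanSpace ℝ (Fin (n + 1))) : EuclideanSpace ℝ (Fin (n + 1)) :=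
  WithLp.toLp 2 (fun i => if (i : ℕ) < m then -x i else x i)

lemma negOn_norm (n m : ℕ) (x : EuclideanSpace ℝ (Fin (n + 1))) : ‖negOn n m x‖ = ‖x‖ := by
  simp only [EuclideanSpace.norm_eq]
  congr 1
  refine Finset.sum_congr rfl fun i _ => ?_
  by_cases h : (i : ℕ) < m <;> simp [negOn, h]

/-- The involution of the sphere `S^n` induced by negating the first `m` coordinates. -/
def sphereNegOn (n m : ℕ) (x : Metric.sphere (0 : EuclideanSpace ℝ (Fin (n + 1))) 1) :
    Metric.sphere (0 : EuclideanSpace ℝ (Fin (n + 1))) 1 :=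
  ⟨negOn n m x, by
    rw [mem_sphere_zero_iff_norm, negOn_norm]
    exact mem_sphere_zero_iff_norm.mp x.2⟩

lemma sphereNegOn_invol (n m : ℕ) (x : Metric.sphere (0 : EuclideanSpace ℝ (Fin (n + 1))) 1) :
    sphereNegOn n m (sphereNegOn n m x) = x := by
  apply Subtype.ext
  ext i
  by_cases h : (i : ℕ) < m <;> simp [sphereNegOn, negOn, h]


section Aux

noncomputable def tailv (n : ℕ) (x : EuclideanSpace ℝ (Fin (n+1))) : EuclideanSpace ℝ (Fin n) :=
  WithLp.toLp 2 (fun j : Fin n => x j.succ)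

noncomputable def mkpt (n : ℕ) (v : EuclideanSpace ℝ (Fin n)) : EuclideanSpace ℝ (Fin (n+1)) :=
  WithLp.toLp 2 (Fin.cons (Real.sqrt (1 - ‖v‖^2)) (fun j => v j) : Fin (n+1) → ℝ)

lemma cont_apply' (n : ℕ) (i : Fin n) : Continuous fun x : EuclideanSpace ℝ (Fin n) => x i :=
  (continuous_apply i).comp (EuclideanSpace.equiv (Fin n) ℝ).continuous

lemma cont_mk' {α : Type*} (n : ℕ) (f : α → EuclideanSpace ℝ (Fin n)) [TopologicalSpace α]
    (h : ∀ i, Continuous fun a => f a i) : Continuous f :=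
  (EuclideanSpace.equiv (Fin n) ℝ).symm.continuous.comp (continuous_pi h)

lemma normsq' (n : ℕ) (x : EuclideanSpace ℝ (Fin n)) : ‖x‖^2 = ∑ i, (x i)^2 := by
  rw [EuclideanSpace.norm_eq, Real.sq_sqrt (by positivity)]
  simp [sq_abs]

lemma tail_normsq (n : ℕ) (x : EuclideanSpace ℝ (Fin (n+1))) :
    ‖tailv n x‖^2 = ‖x‖^2 - (x 0)^2 := by
  rw [normsq', normsq', Fin.sum_univ_succ]
  simp [tailv]

lemma cont_tailv (n : ℕ) : Continuous (tailv n) :=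
  cont_mk' n _ fun j => cont_apply' (n+1) j.succ

lemma cont_mkpt (n : ℕ) : Continuous (mkpt n) := by
  apply cont_mk'
  intro i
  induction i using Fin.cases with
  | zero =>
    have h : (fun v : EuclideanSpace ℝ (Fin n) => mkpt n v 0)
        = fun v => Real.sqrt (1 - ‖v‖^2) := rfl
    rw [h]; exact Real.continuous_sqrt.comp (by continuity)
  | succ j =>
    have h : (fun v : EuclideanSpace ℝ (Fin n) => mkpt n v j.succ) = fun v => v j := rfl
    rw [h]; exact cont_apply' n j

lemma mkpt_norm (n : ℕ) (v : EuclideanSpace ℝ (Fin n)) (hv : ‖v‖ ≤ 1) : ‖mkpt n v‖ = 1 := by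
  have h1 : ‖v‖^2 ≤ 1 := by nlinarith [norm_nonneg v]
  have h2 : ‖mkpt n v‖^2 = 1 := by
    rw [normsq', Fin.sum_univ_succ]
    have h0 : (mkpt n v) 0 = Real.sqrt (1 - ‖v‖^2) := rfl
    have hs : ∀ j : Fin n, (mkpt n v) j.succ = v j := fun j => rfl
    simp only [h0, hs]
    rw [Real.sq_sqrt (by linarith), ← normsq']
    ring
  nlinarith [norm_nonneg (mkpt n v)]

lemma tailv_norm_le (n : ℕ) (x : EuclideanSpace ℝ (Fin (n+1))) (hx : ‖x‖ = 1) :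
    ‖tailv n x‖ ≤ 1 := by
  have h := tail_normsq n x
  rw [hx] at h
  nlinarith [norm_nonneg (tailv n x), sq_nonneg (x 0)]

lemma mkpt_tail (n : ℕ) (x : EuclideanSpace ℝ (Fin (n+1))) (hx : ‖x‖ = 1) :
    mkpt n (tailv n x) = x ∨ mkpt n (tailv n x) = negOn n 1 x := by
  have hsq : ‖tailv n x‖^2 = 1 - (x 0)^2 := by rw [tail_normsq, hx]; ring
  have h0 : (mkpt n (tailv n x)) 0 = |x 0| := by
    show Real.sqrt (1 - ‖tailv n x‖^2) = |x 0|
    rw [hsq]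
    have h : 1 - (1 - (x 0)^2) = (x 0)^2 := by ring
    rw [h, Real.sqrt_sq_eq_abs]
  have hs : ∀ j : Fin n, (mkpt n (tailv n x)) j.succ = x j.succ := fun j => rfl
  rcases le_or_gt 0 (x 0) with h | h
  · left
    ext i
    induction i using Fin.cases with
    | zero => rw [h0, abs_of_nonneg h]
    | succ j => exact hs j
  · right
    ext i
    induction i using Fin.cases with
    | zero =>
      rw [h0, abs_of_neg h]
      show -x 0 = negOn n 1 x 0
      simp [negOn]
    | succ j =>
      rw [hs j]
      show x j.succ = negOn n 1 x j.succ
      simp [negOn, Fin.succ_ne_zero]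

lemma comb_norm_le (n : ℕ) (a b : EuclideanSpace ℝ (Fin n)) (ha : ‖a‖ ≤ 1) (hb : ‖b‖ ≤ 1)
    (t : ℝ) (ht0 : 0 ≤ t) (ht1 : t ≤ 1) : ‖(1 - t) • a + t • b‖ ≤ 1 := by
  calc ‖(1 - t) • a + t • b‖ ≤ ‖(1-t) • a‖ + ‖t • b‖ := norm_add_le _ _
    _ = (1-t) * ‖a‖ + t * ‖b‖ := by
        rw [norm_smul, norm_smul, Real.norm_eq_abs, Real.norm_eq_abs,
          abs_of_nonneg (by linarith), abs_of_nonneg ht0]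
    _ ≤ 1 := by nlinarith

abbrev Sph (n : ℕ) := Metric.sphere (0 : EuclideanSpace ℝ (Fin (n + 1))) 1

lemma sph_norm {n : ℕ} (x : Sph n) : ‖(x : EuclideanSpace ℝ (Fin (n+1)))‖ = 1 :=
  mem_sphere_zero_iff_norm.mp x.2

noncomputable def midPath (n : ℕ) (x y : Sph n) : C(unitInterval, Sph n) where
  toFun t := ⟨mkpt n ((1 - (t:ℝ)) • tailv n x.1 + (t:ℝ) • tailv n y.1), by
    rw [mem_sphere_zero_iff_norm]
    exact mkpt_norm n _ (comb_norm_le n _ _ (tailv_norm_le n _ (sph_norm x))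
      (tailv_norm_le n _ (sph_norm y)) _ t.2.1 t.2.2)⟩
  continuous_toFun := by
    apply Continuous.subtype_mk
    exact (cont_mkpt n).comp
      ((((continuous_const.sub continuous_subtype_val).smul continuous_const).add
        (continuous_subtype_val.smul continuous_const)))

lemma midPath_zero (n : ℕ) (x y : Sph n) :
    (midPath n x y 0 : EuclideanSpace ℝ (Fin (n+1))) = mkpt n (tailv n x.1) := by
  show mkpt n ((1 - ((0:unitInterval):ℝ)) • tailv n x.1 + ((0:unitInterval):ℝ) • tailv n y.1) = _
  norm_num

lemma midPath_one (n : ℕ) (x y : Sph n) :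
    (midPath n x y 1 : EuclideanSpace ℝ (Fin (n+1))) = mkpt n (tailv n y.1) := by
  show mkpt n ((1 - ((1:unitInterval):ℝ)) • tailv n x.1 + ((1:unitInterval):ℝ) • tailv n y.1) = _
  norm_num

lemma cont_midPath (n : ℕ) : Continuous fun p : Sph n × Sph n => midPath n p.1 p.2 := by
  apply ContinuousMap.continuous_of_continuous_uncurry
  apply Continuous.subtype_mk
  apply (cont_mkpt n).comp
  have hx : Continuous fun p : (Sph n × Sph n) × unitInterval => tailv n p.1.1.1 :=
    (cont_tailv n).comp (continuous_subtype_val.comp (continuous_fst.comp continuous_fst))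
  have hy : Continuous fun p : (Sph n × Sph n) × unitInterval => tailv n p.1.2.1 :=
    (cont_tailv n).comp (continuous_subtype_val.comp (continuous_snd.comp continuous_fst))
  have ht : Continuous fun p : (Sph n × Sph n) × unitInterval => ((p.2 : ℝ)) :=
    continuous_subtype_val.comp continuous_snd
  exact ((continuous_const.sub ht).smul hx).add (ht.smul hy)

lemma orbit_invol {X : Type*} (f : X → X) (hf : ∀ x, f (f x) = x) (a b : X)
    (h : b = a ∨ b = f a) :
    b ∈ @MulAction.orbit (Multiplicative (ZMod 2)) X (involutionAction f hf).toSMul a := by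
  rcases h with h | h
  · refine ⟨1, ?_⟩
    show (if (Multiplicative.toAdd (1 : Multiplicative (ZMod 2))) = 1 then f a else a) = b
    rw [if_neg (by decide), h]
  · refine ⟨Multiplicative.ofAdd 1, ?_⟩
    show (if (Multiplicative.toAdd (Multiplicative.ofAdd (1 : ZMod 2))) = 1 then f a else a) = b
    rw [if_pos (by decide), h]

lemma planner_univ (n : ℕ) :
    @IsEffPlanner (Multiplicative (ZMod 2)) (Sph n) _ _
      (involutionAction (sphereNegOn n 1) (sphereNegOn_invol n 1)) 3 (by norm_num)
      Set.univ := by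
  refine ⟨fun u => ![ContinuousMap.const _ (u : Sph n × Sph n).1,
      midPath n (u : Sph n × Sph n).1 (u : Sph n × Sph n).2,
      ContinuousMap.const _ (u : Sph n × Sph n).2], ?_, ?_, ?_⟩
  · apply continuous_pi
    intro i
    fin_cases i
    · exact ContinuousMap.continuous_const'.comp (continuous_fst.comp continuous_subtype_val)
    · exact (cont_midPath n).comp continuous_subtype_val
    · exact ContinuousMap.continuous_const'.comp (continuous_snd.comp continuous_subtype_val)
  · intro u i h
    have h2 : i < 2 := by omega
    interval_cases i
    · show (midPath n (u : Sph n × Sph n).1 (u : Sph n × Sph n).2) 0 ∈ _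
      apply orbit_invol
      have hm := mkpt_tail n ((u : Sph n × Sph n).1 : EuclideanSpace ℝ (Fin (n+1)))
        (sph_norm _)
      rcases hm with hm | hm
      · left
        apply Subtype.ext
        rw [midPath_zero, hm]
        rfl
      · right
        apply Subtype.ext
        rw [midPath_zero, hm]
        rfl
    · show ((ContinuousMap.const _ (u : Sph n × Sph n).2) 0 : Sph n) ∈ _
      apply orbit_invol
      have hsm : mkpt n (tailv n ((u : Sph n × Sph n).2 : EuclideanSpace ℝ (Fin (n+1))))
          ∈ Metric.sphere (0 : EuclideanSpace ℝ (Fin (n+1))) 1 := by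
        rw [mem_sphere_zero_iff_norm]
        exact mkpt_norm n _ (tailv_norm_le n _ (sph_norm _))
      have hmid : (midPath n (u : Sph n × Sph n).1 (u : Sph n × Sph n).2) 1
          = (⟨mkpt n (tailv n ((u : Sph n × Sph n).2 : EuclideanSpace ℝ (Fin (n+1)))),
              hsm⟩ : Sph n) :=
        Subtype.ext (midPath_one n _ _)
      rcases mkpt_tail n ((u : Sph n × Sph n).2 : EuclideanSpace ℝ (Fin (n+1)))
        (sph_norm _) with hm | hm
      · left
        exact (hmid.trans (Subtype.ext hm)).symm
      · right
        have h2 : (⟨mkpt n (tailv n ((u : Sph n × Sph n).2 : EuclideanSpace ℝ (Fin (n+1)))),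
            hsm⟩ : Sph n) = sphereNegOn n 1 (u : Sph n × Sph n).2 := Subtype.ext hm
        exact ((congrArg (sphereNegOn n 1) (hmid.trans h2)).trans
          (sphereNegOn_invol n 1 _)).symm
  · intro u
    exact ⟨rfl, rfl⟩

end Aux

/-- Let `ℤ/2` act on `S^n ⊆ ℝ^{n+1}` by the reflection negating the first
coordinate (interchanging the two hemispheres, fixing an equatorial `(n-1)`-sphere). Then there
is a `(ℤ/2,3)`-motion planner on all of `S^n × S^n`; in particular `TC^{ℤ/2,3}(S^n) = 1` and
`TC^{ℤ/2,∞}(S^n) = 1`. -/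
theorem effTCinf_sphere_reflection (n : ℕ) (hn : 1 ≤ n) :
    @IsEffPlanner (Multiplicative (ZMod 2))
      (Metric.sphere (0 : EuclideanSpace ℝ (Fin (n + 1))) 1) _ _
      (involutionAction (sphereNegOn n 1) (sphereNegOn_invol n 1)) 3 (by norm_num)
      Set.univ ∧
    @effTC (Multiplicative (ZMod 2))
      (Metric.sphere (0 : EuclideanSpace ℝ (Fin (n + 1))) 1) _ _
      (involutionAction (sphereNegOn n 1) (sphereNegOn_invol n 1)) 3 (by norm_num) = 1 ∧
    @effTCinf (Multiplicative (ZMod 2))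
      (Metric.sphere (0 : EuclideanSpace ℝ (Fin (n + 1))) 1) _ _
      (involutionAction (sphereNegOn n 1) (sphereNegOn_invol n 1)) = 1 := by
  letI : MulAction (Multiplicative (ZMod 2)) (Sph n) :=
    involutionAction (sphereNegOn n 1) (sphereNegOn_invol n 1)
  have hplan := planner_univ n
  have hmem : (1 : ℕ∞) ∈ {ℓ : ℕ∞ | ∃ m : ℕ, ℓ = m ∧ 1 ≤ m ∧
      ∃ U : Fin m → Set (Sph n × Sph n), (∀ i, IsOpen (U i)) ∧ (⋃ i, U i) = Set.univ ∧
        ∀ i, @IsEffPlanner (Multiplicative (ZMod 2)) (Sph n) _ _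
          (involutionAction (sphereNegOn n 1) (sphereNegOn_invol n 1)) 3 (by norm_num) (U i)} := by
    exact ⟨1, by norm_num, le_refl 1, fun _ => Set.univ, fun _ => isOpen_univ,
      Set.iUnion_const _, fun _ => hplan⟩
  have hTC : @effTC (Multiplicative (ZMod 2)) (Sph n) _ _
      (involutionAction (sphereNegOn n 1) (sphereNegOn_invol n 1)) 3 (by norm_num) = 1 := by
    apply le_antisymm
    · exact sInf_le hmem
    · apply le_sInf
      rintro ℓ ⟨m, rfl, hm, -⟩
      exact_mod_cast hm
  refine ⟨hplan, hTC, ?_⟩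
  apply le_antisymm
  · calc effTCinf (Multiplicative (ZMod 2)) (Sph n)
        ≤ @effTC (Multiplicative (ZMod 2)) (Sph n) _ _
          (involutionAction (sphereNegOn n 1) (sphereNegOn_invol n 1)) 3 (by norm_num) :=
          iInf_le _ 2
      _ = 1 := hTC
  · apply le_iInf
    intro k
    apply le_sInf
    rintro ℓ ⟨m, rfl, hm, -⟩
    exact_mod_cast hm
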